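/- arXiv:1311.3350 — 3 statements merged into one kernel-verified Lean document; each statement's English description precedes it below -/
import Mathlib

section
/- Let (Ω, 𝓕, P) be a probability space and K a positive integer. For each k in a finite index set I of size K₀, let W_{k,1},...,W_{k,K} and U_{1,k},...,U_{K,k} be events such that for each k the events U_{1,k},...,U_{K,k} partition Ω, W_{k,s} is independent of U_{s,k} for all s, and P(W_{k,s}) ≤ sα/K for all s. Then ∑_{k ∈ I} ∑_{s=1}^{K} (1/s) P(W_{k,s} ∩ U_{s,k}) ≤ (K₀/K)α. -/
open MeasureTheory ProbabilityTheory

theorem stmt11 {Ω : Type*} [MeasurableSpace Ω] (P : Measure Ω) [IsProbabilityMeasure P]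
    {ι : Type*} (I : Finset ι) (K K₀ : ℕ) (hK : 1 ≤ K) (hI : I.card = K₀)
    (α : ℝ)
    (W : ι → ℕ → Set Ω) (U : ℕ → ι → Set Ω)
    (hWMeas : ∀ k s, MeasurableSet (W k s)) (hUMeas : ∀ s k, MeasurableSet (U s k))
    (hpart_disj : ∀ k ∈ I, ∀ s s' : ℕ, 1 ≤ s → s ≤ K → 1 ≤ s' → s' ≤ K → s ≠ s' →
      Disjoint (U s k) (U s' k))
    (hpart_cover : ∀ k ∈ I, (⋃ s ∈ Finset.Icc 1 K, U s k) = Set.univ)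
    (hindep : ∀ k ∈ I, ∀ s, 1 ≤ s → s ≤ K → IndepSet (W k s) (U s k) P)
    (hbound : ∀ k ∈ I, ∀ s, 1 ≤ s → s ≤ K → (P (W k s)).toReal ≤ s * α / K) :
    ∑ k ∈ I, ∑ s ∈ Finset.Icc 1 K, (1 / (s : ℝ)) * (P (W k s ∩ U s k)).toReal
      ≤ ((K₀ : ℝ) / K) * α := by
  have hKpos : (0 : ℝ) < K := by exact_mod_cast hK
  have hinner : ∀ k ∈ I, ∑ s ∈ Finset.Icc 1 K, (1 / (s : ℝ)) * (P (W k s ∩ U s k)).toReal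
      ≤ α / K := by
    intro k hk
    have step : ∀ s ∈ Finset.Icc 1 K, (1 / (s : ℝ)) * (P (W k s ∩ U s k)).toReal
        ≤ (α / K) * (P (U s k)).toReal := by
      intro s hs
      obtain ⟨hs1, hsK⟩ := Finset.mem_Icc.mp hs
      have hspos : (0 : ℝ) < s := by exact_mod_cast hs1
      have hPeq : P (W k s ∩ U s k) = P (W k s) * P (U s k) :=
        (hindep k hk s hs1 hsK).measure_inter_eq_mul
      have hfin : ∀ A : Set Ω, P A ≠ ⊤ := fun A => (measure_lt_top P A).ne
      have hPreal : (P (W k s ∩ U s k)).toReal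
          = (P (W k s)).toReal * (P (U s k)).toReal := by
        rw [hPeq, ENNReal.toReal_mul]
      rw [hPreal]
      have hb := hbound k hk s hs1 hsK
      have hU0 : (0 : ℝ) ≤ (P (U s k)).toReal := ENNReal.toReal_nonneg
      calc (1 / (s : ℝ)) * ((P (W k s)).toReal * (P (U s k)).toReal)
          ≤ (1 / (s : ℝ)) * ((s * α / K) * (P (U s k)).toReal) := by
            apply mul_le_mul_of_nonneg_left (mul_le_mul_of_nonneg_right hb hU0)
            positivity
        _ = (α / K) * (P (U s k)).toReal := by
            field_simp
    calc ∑ s ∈ Finset.Icc 1 K, (1 / (s : ℝ)) * (P (W k s ∩ U s k)).toReal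
        ≤ ∑ s ∈ Finset.Icc 1 K, (α / K) * (P (U s k)).toReal := Finset.sum_le_sum step
      _ = (α / K) * ∑ s ∈ Finset.Icc 1 K, (P (U s k)).toReal := by rw [Finset.mul_sum]
      _ = α / K := by
          have hdisj : ((Finset.Icc 1 K : Finset ℕ) : Set ℕ).PairwiseDisjoint (fun s => U s k) := by
            intro s hs s' hs' hne
            simp only [Finset.coe_Icc, Set.mem_Icc] at hs hs'
            exact hpart_disj k hk s s' hs.1 hs.2 hs'.1 hs'.2 hne
          have : P (⋃ s ∈ Finset.Icc 1 K, U s k) = ∑ s ∈ Finset.Icc 1 K, P (U s k) :=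
            measure_biUnion_finset hdisj (fun s _ => hUMeas s k)
          rw [hpart_cover k hk, measure_univ] at this
          have := congrArg ENNReal.toReal this
          rw [ENNReal.toReal_one, ENNReal.toReal_sum (fun s _ => (measure_lt_top P _).ne)] at this
          rw [← this, mul_one]
  calc ∑ k ∈ I, ∑ s ∈ Finset.Icc 1 K, (1 / (s : ℝ)) * (P (W k s ∩ U s k)).toReal
      ≤ ∑ _k ∈ I, α / K := Finset.sum_le_sum hinner
    _ = K₀ * (α / K) := by rw [Finset.sum_const, hI, nsmul_eq_mul]
    _ = ((K₀ : ℝ) / K) * α := by ring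
end

section
/- Fix 0 < α < 1, 0 < β ≤ 1 - α, integer K ≥ 1, ρ ≥ 0. The critical values A_s = log(sβ/((1-α_s)K)) - ρ and B_s = log((1-β_s)K/(sα)) + ρ, with α_s = α(K-sβ)/(K(K-β)) and β_s = β(K-sα)/(K(K-α)), satisfy the ordering A_1 ≤ A_2 ≤ ... ≤ A_K and B_K ≤ B_{K-1} ≤ ... ≤ B_1. -/
theorem stmt15 (α β ρ : ℝ) (hα0 : 0 < α) (hα1 : α < 1) (hβ0 : 0 < β) (hβ1 : β ≤ 1 - α)
    (K : ℕ) (hK : 1 ≤ K) (hρ : 0 ≤ ρ)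
    (αs βs A B : ℕ → ℝ)
    (hαs : ∀ s : ℕ, αs s = α * ((K : ℝ) - s * β) / (K * ((K : ℝ) - β)))
    (hβs : ∀ s : ℕ, βs s = β * ((K : ℝ) - s * α) / (K * ((K : ℝ) - α)))
    (hA : ∀ s : ℕ, A s = Real.log ((s : ℝ) * β / ((1 - αs s) * K)) - ρ)
    (hB : ∀ s : ℕ, B s = Real.log ((1 - βs s) * K / ((s : ℝ) * α)) + ρ) :
    ∀ s : ℕ, 1 ≤ s → s < K → A s ≤ A (s + 1) ∧ B (s + 1) ≤ B s := by
  intro s hs hsK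
  have hK1 : (1 : ℝ) ≤ K := by exact_mod_cast hK
  have ht : (1 : ℝ) ≤ (s : ℝ) := by exact_mod_cast hs
  have htK : (s : ℝ) + 1 ≤ K := by exact_mod_cast hsK
  have hKpos : (0 : ℝ) < K := by linarith
  have hKβ : (0 : ℝ) < (K : ℝ) - β := by linarith
  have hKα : (0 : ℝ) < (K : ℝ) - α := by linarith
  have hd : (0 : ℝ) ≤ (K : ℝ) - α - β := by linarith
  have hDβ : (0 : ℝ) < (K : ℝ) * ((K : ℝ) - β) := mul_pos hKpos hKβ
  have hDα : (0 : ℝ) < (K : ℝ) * ((K : ℝ) - α) := mul_pos hKpos hKα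
  -- positivity of 1 - αs at s and s+1
  have hα1s : ∀ u : ℕ, 1 ≤ (u : ℝ) → 0 < 1 - αs u := by
    intro u hu
    rw [hαs u, sub_pos, div_lt_one hDβ]
    nlinarith [mul_pos hα0 hβ0, mul_le_mul_of_nonneg_right hu (le_of_lt (mul_pos hα0 hβ0))]
  have hβ1s : ∀ u : ℕ, 1 ≤ (u : ℝ) → 0 < 1 - βs u := by
    intro u hu
    rw [hβs u, sub_pos, div_lt_one hDα]
    nlinarith [mul_pos hα0 hβ0, mul_le_mul_of_nonneg_right hu (le_of_lt (mul_pos hα0 hβ0))]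
  have hs1 : (1 : ℝ) ≤ ((s + 1 : ℕ) : ℝ) := by push_cast; linarith
  have hcast : ((s + 1 : ℕ) : ℝ) = (s : ℝ) + 1 := by push_cast; ring
  constructor
  · rw [hA s, hA (s + 1)]
    apply sub_le_sub_right
    apply Real.log_le_log
    · exact div_pos (mul_pos (by linarith) hβ0) (mul_pos (hα1s s ht) hKpos)
    · rw [div_le_div_iff₀ (mul_pos (hα1s s ht) hKpos) (mul_pos (hα1s (s + 1) hs1) hKpos)]
      rw [hαs s, hαs (s + 1), hcast]
      field_simp
      nlinarith [mul_nonneg (mul_nonneg (mul_nonneg hβ0.le hKpos.le) hDβ.le)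
        (mul_nonneg hKpos.le hd)]
  · rw [hB s, hB (s + 1)]
    apply add_le_add_left
    have hsp : (0 : ℝ) < (s : ℝ) := by linarith
    have hsp1 : (0 : ℝ) < ((s + 1 : ℕ) : ℝ) := by rw [hcast]; linarith
    apply Real.log_le_log
    · exact div_pos (mul_pos (hβ1s (s + 1) hs1) hKpos) (mul_pos hsp1 hα0)
    · rw [div_le_div_iff₀ (mul_pos hsp1 hα0) (mul_pos hsp hα0)]
      rw [hβs s, hβs (s + 1), hcast]
      field_simp
      nlinarith [mul_nonneg (mul_nonneg (mul_nonneg hα0.le hKpos.le) hDα.le)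
        (mul_nonneg hKpos.le hd)]
end

section
/- Let K ≥ 1, and for each k in a finite set I with |I| = K₀ ≤ K, suppose W_{k,1} ⊆ W_{k,2} ⊆ ... ⊆ W_{k,K} are nested events with P(W_{k,ℓ}) ≤ ℓα/K, and U_{1,k},...,U_{K,k} partition the sample space for each k. Then ∑_{k∈I} ∑_{s=1}^{K} (1/s) P(W_{k,s} ∩ U_{s,k}) ≤ (K₀/K) α ∑_{ℓ=1}^{K} 1/ℓ, with no independence assumption. -/
open MeasureTheory

/-- Abel-summation bound: if `f 0 = 0` and `f ℓ ≤ ℓα/K` for `1 ≤ ℓ ≤ K`, then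
`∑_{ℓ=1}^n (1/ℓ)(f ℓ - f (ℓ-1)) ≤ (α/K) H_n - α/K + f n / n`. -/
lemma abel_aux19 (K : ℕ) (α : ℝ) (hK : 1 ≤ K) (f : ℕ → ℝ) (hf0 : f 0 = 0)
    (hb : ∀ ℓ : ℕ, 1 ≤ ℓ → ℓ ≤ K → f ℓ ≤ ℓ * α / K) :
    ∀ n : ℕ, 1 ≤ n → n ≤ K →
      ∑ ℓ ∈ Finset.Icc 1 n, (1 / (ℓ : ℝ)) * (f ℓ - f (ℓ - 1))
        ≤ α / K * ∑ ℓ ∈ Finset.Icc 1 n, (1 / (ℓ : ℝ)) - α / K + f n / n := by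
  intro n
  induction n with
  | zero => intro h; omega
  | succ n ih =>
    intro _ hnK
    rcases Nat.eq_zero_or_pos n with h0 | hn
    · subst h0
      simp [hf0]
    · have hIcc : ∀ g : ℕ → ℝ, ∑ ℓ ∈ Finset.Icc 1 (n + 1), g ℓ
          = (∑ ℓ ∈ Finset.Icc 1 n, g ℓ) + g (n + 1) := fun g =>
        Finset.sum_Icc_succ_top (by omega) g
      rw [hIcc, hIcc]
      have ihn := ih hn (by omega)
      have hfn : f n ≤ n * α / K := hb n hn (by omega)
      have hnR : (1 : ℝ) ≤ (n : ℝ) := by exact_mod_cast hn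
      have hn1 : (0 : ℝ) < (n : ℝ) + 1 := by positivity
      have hcast : ((n + 1 : ℕ) : ℝ) = (n : ℝ) + 1 := by push_cast; ring
      have hsub : ((n + 1 : ℕ) - 1 : ℕ) = n := by omega
      rw [hsub, hcast]
      have hKR : (0 : ℝ) < (K : ℝ) := by exact_mod_cast hK
      have key : f n / n + 1 / ((n : ℝ) + 1) * (f (n + 1) - f n)
          ≤ α / K / ((n : ℝ) + 1) + f (n + 1) / ((n : ℝ) + 1) := by
        have h1 : f n / (n : ℝ) - f n / ((n : ℝ) + 1) ≤ α / K / ((n : ℝ) + 1) := by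
          have hn0 : (0 : ℝ) < (n : ℝ) := by linarith
          have e1 : f n / (n : ℝ) - f n / ((n : ℝ) + 1)
              = f n * (1 / ((n : ℝ) * ((n : ℝ) + 1))) := by
            field_simp
            ring
          have e2 : (n : ℝ) * α / K * (1 / ((n : ℝ) * ((n : ℝ) + 1)))
              = α / K / ((n : ℝ) + 1) := by
            field_simp
          rw [e1, ← e2]
          apply mul_le_mul_of_nonneg_right hfn
          positivity
        have e3 : 1 / ((n : ℝ) + 1) * (f (n + 1) - f n)
            = f (n + 1) / ((n : ℝ) + 1) - f n / ((n : ℝ) + 1) := by ring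
        rw [e3]
        linarith
      have hd : α / (K : ℝ) * ((∑ ℓ ∈ Finset.Icc 1 n, (1 / (ℓ : ℝ))) + 1 / ((n : ℝ) + 1))
          = α / (K : ℝ) * (∑ ℓ ∈ Finset.Icc 1 n, (1 / (ℓ : ℝ))) + α / K / ((n : ℝ) + 1) := by
        ring
      push_cast at key hd ⊢
      linarith

theorem stmt19 {Ω : Type*} [MeasurableSpace Ω] (P : Measure Ω) [IsProbabilityMeasure P]
    {ι : Type*} (I : Finset ι) (K K₀ : ℕ) (hK : 1 ≤ K) (hI : I.card = K₀) (hK₀K : K₀ ≤ K)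
    (α : ℝ)
    (W : ι → ℕ → Set Ω) (U : ℕ → ι → Set Ω)
    (hWMeas : ∀ k s, MeasurableSet (W k s)) (hUMeas : ∀ s k, MeasurableSet (U s k))
    (hnested : ∀ k ∈ I, ∀ ℓ : ℕ, 1 ≤ ℓ → ℓ < K → W k ℓ ⊆ W k (ℓ + 1))
    (hbound : ∀ k ∈ I, ∀ ℓ : ℕ, 1 ≤ ℓ → ℓ ≤ K → (P (W k ℓ)).toReal ≤ ℓ * α / K)
    (hpart_disj : ∀ k ∈ I, ∀ s s' : ℕ, 1 ≤ s → s ≤ K → 1 ≤ s' → s' ≤ K → s ≠ s' →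
      Disjoint (U s k) (U s' k))
    (hpart_cover : ∀ k ∈ I, (⋃ s ∈ Finset.Icc 1 K, U s k) = Set.univ) :
    ∑ k ∈ I, ∑ s ∈ Finset.Icc 1 K, (1 / (s : ℝ)) * (P (W k s ∩ U s k)).toReal
      ≤ ((K₀ : ℝ) / K) * α * ∑ ℓ ∈ Finset.Icc 1 K, (1 / (ℓ : ℝ)) := by
  set H := ∑ ℓ ∈ Finset.Icc 1 K, (1 / (ℓ : ℝ)) with hH
  suffices h : ∀ k ∈ I, ∑ s ∈ Finset.Icc 1 K, (1 / (s : ℝ)) * (P (W k s ∩ U s k)).toReal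
      ≤ α / K * H by
    calc ∑ k ∈ I, ∑ s ∈ Finset.Icc 1 K, (1 / (s : ℝ)) * (P (W k s ∩ U s k)).toReal
        ≤ ∑ _k ∈ I, α / K * H := Finset.sum_le_sum h
      _ = (K₀ : ℝ) * (α / K * H) := by rw [Finset.sum_const, hI, nsmul_eq_mul]
      _ = ((K₀ : ℝ) / K) * α * H := by ring
  intro k hk
  -- The nested family with `V 0 = ∅`.
  set V : ℕ → Set Ω := fun ℓ => if ℓ = 0 then ∅ else W k ℓ with hV
  have hVmeas : ∀ ℓ, MeasurableSet (V ℓ) := by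
    intro ℓ
    by_cases h : ℓ = 0 <;> simp [hV, h, hWMeas]
  have hVstep : ∀ ℓ : ℕ, ℓ < K → V ℓ ⊆ V (ℓ + 1) := by
    intro ℓ hℓ
    rcases Nat.eq_zero_or_pos ℓ with h0 | h1
    · subst h0; simp [hV]
    · simp only [hV]
      rw [if_neg (by omega : ¬ ℓ = 0), if_neg (by omega : ¬ ℓ + 1 = 0)]
      exact hnested k hk ℓ h1 hℓ
  have hVmono : ∀ b a : ℕ, a ≤ b → b ≤ K → V a ⊆ V b := by
    intro b
    induction b with
    | zero => intro a hab _; simp_all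
    | succ b ih =>
      intro a hab hbK
      rcases Nat.lt_succ_iff_lt_or_eq.mp (Nat.lt_succ_of_le hab) with h | h
      · exact (ih a (by omega) (by omega)).trans (hVstep b (by omega))
      · subst h; exact subset_rfl
  -- The disjoint increments.
  set D : ℕ → Set Ω := fun ℓ => V ℓ \ V (ℓ - 1) with hD
  have hDmeas : ∀ ℓ, MeasurableSet (D ℓ) := fun ℓ => (hVmeas ℓ).diff (hVmeas (ℓ - 1))
  have hDsub : ∀ ℓ, D ℓ ⊆ V ℓ := fun ℓ => Set.diff_subset
  have hDdisj : ∀ ℓ ℓ' : ℕ, 1 ≤ ℓ → ℓ ≤ K → 1 ≤ ℓ' → ℓ' ≤ K → ℓ ≠ ℓ' →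
      Disjoint (D ℓ) (D ℓ') := by
    have key : ∀ ℓ ℓ' : ℕ, ℓ < ℓ' → ℓ' ≤ K → Disjoint (D ℓ) (D ℓ') := by
      intro ℓ ℓ' hlt hK'
      have h1 : D ℓ ⊆ V (ℓ' - 1) :=
        (hDsub ℓ).trans (hVmono (ℓ' - 1) ℓ (by omega) (by omega))
      have h2 : Disjoint (D ℓ') (V (ℓ' - 1)) := by
        simp only [hD]
        exact Set.disjoint_sdiff_left
      exact (h2.mono_right h1).symm
    intro ℓ ℓ' h1 h2 h3 h4 hne
    rcases Nat.lt_or_ge ℓ ℓ' with h | h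
    · exact key ℓ ℓ' h h4
    · exact (key ℓ' ℓ (by omega) h2).symm
  have hVunion : ∀ s : ℕ, s ≤ K → V s = ⋃ ℓ ∈ Finset.Icc 1 s, D ℓ := by
    intro s
    induction s with
    | zero => intro _; simp [hV]
    | succ s ih =>
      intro hsK
      rw [← Finset.insert_Icc_right_eq_Icc_add_one (by omega : 1 ≤ s + 1), Finset.set_biUnion_insert,
        ← ih (by omega)]
      have : (s + 1 : ℕ) - 1 = s := by omega
      rw [hD]
      simp only [this]
      rw [Set.diff_union_of_subset (hVstep s (by omega))]
  -- measures as reals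
  set p : ℕ → ℕ → ℝ := fun ℓ s => (P (D ℓ ∩ U s k)).toReal with hp
  have hpnn : ∀ ℓ s, 0 ≤ p ℓ s := fun ℓ s => ENNReal.toReal_nonneg
  -- Step A: decompose each `W k s ∩ U s k`.
  have stepA : ∀ s ∈ Finset.Icc 1 K,
      (P (W k s ∩ U s k)).toReal = ∑ ℓ ∈ Finset.Icc 1 s, p ℓ s := by
    intro s hs
    rw [Finset.mem_Icc] at hs
    have hWV : W k s = V s := by
      simp only [hV]
      rw [if_neg (by omega : ¬ s = 0)]
    rw [hWV, hVunion s hs.2, Set.iUnion₂_inter]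
    rw [measure_biUnion_finset ?_ (fun ℓ _ => (hDmeas ℓ).inter (hUMeas s k))]
    · exact ENNReal.toReal_sum fun ℓ _ => measure_ne_top P _
    · intro ℓ hℓ ℓ' hℓ' hne
      rw [Finset.mem_coe, Finset.mem_Icc] at hℓ hℓ'
      exact ((hDdisj ℓ ℓ' hℓ.1 (hℓ.2.trans hs.2) hℓ'.1 (hℓ'.2.trans hs.2) hne).mono
        Set.inter_subset_left Set.inter_subset_left)
  -- Step B: the partition identity.
  have stepB : ∀ ℓ : ℕ, ∑ s ∈ Finset.Icc 1 K, p ℓ s = (P (D ℓ)).toReal := by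
    intro ℓ
    have hcup : ⋃ s ∈ Finset.Icc 1 K, (D ℓ ∩ U s k) = D ℓ := by
      rw [← Set.inter_iUnion₂, hpart_cover k hk, Set.inter_univ]
    rw [← hcup, measure_biUnion_finset ?_ (fun s _ => (hDmeas ℓ).inter (hUMeas s k))]
    · exact (ENNReal.toReal_sum fun s _ => measure_ne_top P _).symm
    · intro s hs s' hs' hne
      rw [Finset.mem_coe, Finset.mem_Icc] at hs hs'
      exact (hpart_disj k hk s s' hs.1 hs.2 hs'.1 hs'.2 hne).mono
        Set.inter_subset_right Set.inter_subset_right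
  -- the cumulative function
  set f : ℕ → ℝ := fun ℓ => (P (V ℓ)).toReal with hf
  have hf0 : f 0 = 0 := by simp [hf, hV]
  have hfb : ∀ ℓ : ℕ, 1 ≤ ℓ → ℓ ≤ K → f ℓ ≤ ℓ * α / K := by
    intro ℓ h1 h2
    have hVW : V ℓ = W k ℓ := by
      simp only [hV]
      rw [if_neg (by omega : ¬ ℓ = 0)]
    simp only [hf, hVW]
    exact hbound k hk ℓ h1 h2
  have hDmeasure : ∀ ℓ : ℕ, 1 ≤ ℓ → ℓ ≤ K → (P (D ℓ)).toReal = f ℓ - f (ℓ - 1) := by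
    intro ℓ h1 h2
    have hsub : V (ℓ - 1) ⊆ V ℓ := hVmono ℓ (ℓ - 1) (by omega) h2
    rw [hD]
    simp only
    rw [measure_diff hsub (hVmeas (ℓ - 1)).nullMeasurableSet (measure_ne_top P _),
      ENNReal.toReal_sub_of_le (measure_mono hsub) (measure_ne_top P _)]
  -- combine
  calc ∑ s ∈ Finset.Icc 1 K, (1 / (s : ℝ)) * (P (W k s ∩ U s k)).toReal
      = ∑ s ∈ Finset.Icc 1 K, ∑ ℓ ∈ Finset.Icc 1 s, (1 / (s : ℝ)) * p ℓ s := by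
        refine Finset.sum_congr rfl fun s hs => ?_
        rw [stepA s hs, Finset.mul_sum]
    _ ≤ ∑ s ∈ Finset.Icc 1 K, ∑ ℓ ∈ Finset.Icc 1 s, (1 / (ℓ : ℝ)) * p ℓ s := by
        refine Finset.sum_le_sum fun s hs => Finset.sum_le_sum fun ℓ hℓ => ?_
        rw [Finset.mem_Icc] at hs hℓ
        have h1 : (0 : ℝ) < (ℓ : ℝ) := by exact_mod_cast hℓ.1
        have h2 : (ℓ : ℝ) ≤ (s : ℝ) := by exact_mod_cast hℓ.2
        exact mul_le_mul_of_nonneg_right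
          (one_div_le_one_div_of_le h1 h2) (hpnn ℓ s)
    _ = ∑ s ∈ Finset.Icc 1 K, ∑ ℓ ∈ Finset.Icc 1 K,
          (if ℓ ≤ s then (1 / (ℓ : ℝ)) * p ℓ s else 0) := by
        refine Finset.sum_congr rfl fun s hs => ?_
        rw [Finset.mem_Icc] at hs
        refine Eq.trans ?_ (Finset.sum_subset (Finset.Icc_subset_Icc_right hs.2)
          fun ℓ hℓK hℓs => ?_)
        · exact Finset.sum_congr rfl fun ℓ hℓ => (if_pos (Finset.mem_Icc.mp hℓ).2).symm
        · rw [Finset.mem_Icc] at hℓK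
          exact if_neg fun hle => hℓs (Finset.mem_Icc.mpr ⟨hℓK.1, hle⟩)
    _ = ∑ ℓ ∈ Finset.Icc 1 K, ∑ s ∈ Finset.Icc 1 K,
          (if ℓ ≤ s then (1 / (ℓ : ℝ)) * p ℓ s else 0) := Finset.sum_comm
    _ ≤ ∑ ℓ ∈ Finset.Icc 1 K, (1 / (ℓ : ℝ)) * (f ℓ - f (ℓ - 1)) := by
        refine Finset.sum_le_sum fun ℓ hℓ => ?_
        rw [Finset.mem_Icc] at hℓ
        have h1 : ∑ s ∈ Finset.Icc 1 K, (if ℓ ≤ s then (1 / (ℓ : ℝ)) * p ℓ s else 0)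
            ≤ (1 / (ℓ : ℝ)) * ∑ s ∈ Finset.Icc 1 K, p ℓ s := by
          rw [Finset.mul_sum]
          refine Finset.sum_le_sum fun s _ => ?_
          split
          · exact le_rfl
          · positivity
        calc ∑ s ∈ Finset.Icc 1 K, (if ℓ ≤ s then (1 / (ℓ : ℝ)) * p ℓ s else 0)
            ≤ (1 / (ℓ : ℝ)) * ∑ s ∈ Finset.Icc 1 K, p ℓ s := h1
          _ = (1 / (ℓ : ℝ)) * (f ℓ - f (ℓ - 1)) := by
              rw [stepB ℓ, hDmeasure ℓ hℓ.1 hℓ.2]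
    _ ≤ α / K * H := by
        have habel := abel_aux19 K α hK f hf0 hfb K hK le_rfl
        have hKpos : (0 : ℝ) < (K : ℝ) := by exact_mod_cast hK
        have hfK : f K ≤ α := by
          have h := hfb K hK le_rfl
          have he : (K : ℝ) * α / K = α := by field_simp
          rwa [he] at h
        have hdiv : f K / K ≤ α / K := (div_le_div_iff_of_pos_right hKpos).mpr hfK
        rw [← hH] at habel
        linarith
end
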